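/- arXiv:math/0503572 — 2 statements merged into one kernel-verified Lean document; each statement's English description precedes it below -/
import Mathlib

section
/- For every ε > 0 there exists δ > 0 with the following property. Let V1, V2, V3 be finite non-empty sets and let E12 ⊆ V1 × V2, E23 ⊆ V2 × V3, E31 ⊆ V3 × V1. If the number of triples (x1, x2, x3) ∈ V1 × V2 × V3 with (x1, x2) ∈ E12, (x2, x3) ∈ E23 and (x3, x1) ∈ E31 is at most δ|V1||V2||V3|, then there exist sets E'12 ⊆ V1 × V2, E'23 ⊆ V2 × V3, E'31 ⊆ V3 × V1 such that no triple (x1, x2, x3) satisfies (x1, x2) ∈ E'12, (x2, x3) ∈ E'23 and (x3, x1) ∈ E'31, and such that |E_ij \ E'_ij| ≤ ε|V_i||V_j| for each ij = 12, 23, 31. -/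
open scoped Classical BigOperators

section Aux
open Finset SimpleGraph

section Aux

variable {V1 V2 V3 : Type}

/-- Relation underlying the blown-up tripartite graph. -/
def triRel (E12 : Finset (V1 × V2)) (E23 : Finset (V2 × V3)) (E31 : Finset (V3 × V1)) :
    ((V1 × V2 × V3) ⊕ (V1 × V2 × V3) ⊕ (V1 × V2 × V3)) →
    ((V1 × V2 × V3) ⊕ (V1 × V2 × V3) ⊕ (V1 × V2 × V3)) → Prop
  | Sum.inl a, Sum.inr (Sum.inl b) => (a.1, b.2.1) ∈ E12
  | Sum.inr (Sum.inl a), Sum.inr (Sum.inr b) => (a.2.1, b.2.2) ∈ E23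
  | Sum.inr (Sum.inr a), Sum.inl b => (a.2.2, b.1) ∈ E31
  | _, _ => False

variable (E12 : Finset (V1 × V2)) (E23 : Finset (V2 × V3)) (E31 : Finset (V3 × V1))

@[simp] lemma triRel_11 (a b : V1 × V2 × V3) :
    triRel E12 E23 E31 (Sum.inl a) (Sum.inl b) ↔ False := Iff.rfl
@[simp] lemma triRel_12 (a b : V1 × V2 × V3) :
    triRel E12 E23 E31 (Sum.inl a) (Sum.inr (Sum.inl b)) ↔ (a.1, b.2.1) ∈ E12 := Iff.rfl
@[simp] lemma triRel_13 (a b : V1 × V2 × V3) :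
    triRel E12 E23 E31 (Sum.inl a) (Sum.inr (Sum.inr b)) ↔ False := Iff.rfl
@[simp] lemma triRel_21 (a b : V1 × V2 × V3) :
    triRel E12 E23 E31 (Sum.inr (Sum.inl a)) (Sum.inl b) ↔ False := Iff.rfl
@[simp] lemma triRel_22 (a b : V1 × V2 × V3) :
    triRel E12 E23 E31 (Sum.inr (Sum.inl a)) (Sum.inr (Sum.inl b)) ↔ False := Iff.rfl
@[simp] lemma triRel_23 (a b : V1 × V2 × V3) :
    triRel E12 E23 E31 (Sum.inr (Sum.inl a)) (Sum.inr (Sum.inr b)) ↔ (a.2.1, b.2.2) ∈ E23 := Iff.rfl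
@[simp] lemma triRel_31 (a b : V1 × V2 × V3) :
    triRel E12 E23 E31 (Sum.inr (Sum.inr a)) (Sum.inl b) ↔ (a.2.2, b.1) ∈ E31 := Iff.rfl
@[simp] lemma triRel_32 (a b : V1 × V2 × V3) :
    triRel E12 E23 E31 (Sum.inr (Sum.inr a)) (Sum.inr (Sum.inl b)) ↔ False := Iff.rfl
@[simp] lemma triRel_33 (a b : V1 × V2 × V3) :
    triRel E12 E23 E31 (Sum.inr (Sum.inr a)) (Sum.inr (Sum.inr b)) ↔ False := Iff.rfl

/-- The blown-up tripartite graph. -/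
def triGraph : SimpleGraph ((V1 × V2 × V3) ⊕ (V1 × V2 × V3) ⊕ (V1 × V2 × V3)) where
  Adj x y := triRel E12 E23 E31 x y ∨ triRel E12 E23 E31 y x
  symm := ⟨fun x y h => h.symm⟩
  loopless := ⟨fun x h => by rcases x with a | a | a <;> exact h.elim id id⟩

@[simp] lemma triGraph_adj (x y) :
    (triGraph E12 E23 E31).Adj x y ↔ triRel E12 E23 E31 x y ∨ triRel E12 E23 E31 y x := Iff.rfl

variable [Fintype V1] [Fintype V2] [Fintype V3]

lemma card_fix1 (x1 : V1) :
    #(univ.filter fun a : V1 × V2 × V3 => a.1 = x1) = Fintype.card V2 * Fintype.card V3 := by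
  rw [← Fintype.card_prod, ← card_univ]
  apply Finset.card_nbij' (i := fun a => a.2) (j := fun p => (x1, p)) <;> simp +contextual
    [Prod.ext_iff, Set.LeftInvOn, Set.RightInvOn, Set.EqOn]

lemma card_fix2 (x2 : V2) :
    #(univ.filter fun a : V1 × V2 × V3 => a.2.1 = x2) = Fintype.card V1 * Fintype.card V3 := by
  rw [← Fintype.card_prod, ← card_univ]
  apply Finset.card_nbij' (i := fun a => (a.1, a.2.2)) (j := fun p => (p.1, x2, p.2)) <;>
    simp +contextual [Prod.ext_iff, Set.LeftInvOn, Set.RightInvOn, Set.EqOn]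

lemma card_fix3 (x3 : V3) :
    #(univ.filter fun a : V1 × V2 × V3 => a.2.2 = x3) = Fintype.card V1 * Fintype.card V2 := by
  rw [← Fintype.card_prod, ← card_univ]
  apply Finset.card_nbij' (i := fun a => (a.1, a.2.1)) (j := fun p => (p.1, p.2, x3)) <;>
    simp +contextual [Prod.ext_iff, Set.LeftInvOn, Set.RightInvOn, Set.EqOn]

/-- The clique count of the blown-up graph is at most the triangle count times `N²`. -/
lemma cliqueCard_le :
    #((triGraph E12 E23 E31).cliqueFinset 3) ≤
      #(univ.filter (fun p : V1 × V2 × V3 =>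
          (p.1, p.2.1) ∈ E12 ∧ (p.2.1, p.2.2) ∈ E23 ∧ (p.2.2, p.1) ∈ E31)) *
        ((Fintype.card V2 * Fintype.card V3) *
          ((Fintype.card V1 * Fintype.card V3) * (Fintype.card V1 * Fintype.card V2))) := by
  classical
  set T := univ.filter (fun p : V1 × V2 × V3 =>
      (p.1, p.2.1) ∈ E12 ∧ (p.2.1, p.2.2) ∈ E23 ∧ (p.2.2, p.1) ∈ E31) with hT
  have := Finset.card_le_card_of_surjOn
    (s := T ×ˢ (univ : Finset ((V2 × V3) × (V1 × V3) × (V1 × V2))))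
    (t := (triGraph E12 E23 E31).cliqueFinset 3)
    (fun q => ({Sum.inl (q.1.1, q.2.1),
        Sum.inr (Sum.inl (q.2.2.1.1, q.1.2.1, q.2.2.1.2)),
        Sum.inr (Sum.inr (q.2.2.2.1, q.2.2.2.2, q.1.2.2))} :
          Finset ((V1 × V2 × V3) ⊕ (V1 × V2 × V3) ⊕ (V1 × V2 × V3))))
    ?_
  · simpa [Finset.card_product, Fintype.card_prod] using this
  intro t ht
  simp only [Finset.coe_product, Set.mem_prod] at *
  rw [Finset.mem_coe, SimpleGraph.mem_cliqueFinset_iff, SimpleGraph.is3Clique_iff] at ht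
  obtain ⟨x, y, z, hxy, hxz, hyz, rfl⟩ := ht
  rcases x with a | a | a <;> rcases y with b | b | b <;> rcases z with c | c | c <;>
    simp only [triGraph_adj, triRel_11, triRel_12, triRel_13, triRel_21, triRel_22, triRel_23,
      triRel_31, triRel_32, triRel_33, or_false, false_or] at hxy hxz hyz
  -- 6 valid cases remain; provide witnesses
  · exact ⟨((a.1, b.2.1, c.2.2), (a.2, (b.1, b.2.2), (c.1, c.2.1))),
      ⟨by refine Finset.mem_filter.2 ⟨Finset.mem_univ _, ?_, ?_, ?_⟩ <;> assumption, Finset.mem_coe.2 (Finset.mem_univ _)⟩, by ext v; simp; try tauto⟩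
  · exact ⟨((a.1, c.2.1, b.2.2), (a.2, (c.1, c.2.2), (b.1, b.2.1))),
      ⟨by refine Finset.mem_filter.2 ⟨Finset.mem_univ _, ?_, ?_, ?_⟩ <;> assumption, Finset.mem_coe.2 (Finset.mem_univ _)⟩, by ext v; simp; try tauto⟩
  · exact ⟨((b.1, a.2.1, c.2.2), (b.2, (a.1, a.2.2), (c.1, c.2.1))),
      ⟨by refine Finset.mem_filter.2 ⟨Finset.mem_univ _, ?_, ?_, ?_⟩ <;> assumption, Finset.mem_coe.2 (Finset.mem_univ _)⟩, by ext v; simp; try tauto⟩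
  · exact ⟨((c.1, a.2.1, b.2.2), (c.2, (a.1, a.2.2), (b.1, b.2.1))),
      ⟨by refine Finset.mem_filter.2 ⟨Finset.mem_univ _, ?_, ?_, ?_⟩ <;> assumption, Finset.mem_coe.2 (Finset.mem_univ _)⟩, by ext v; simp; try tauto⟩
  · exact ⟨((b.1, c.2.1, a.2.2), (b.2, (c.1, c.2.2), (a.1, a.2.1))),
      ⟨by refine Finset.mem_filter.2 ⟨Finset.mem_univ _, ?_, ?_, ?_⟩ <;> assumption, Finset.mem_coe.2 (Finset.mem_univ _)⟩, by ext v; simp; try tauto⟩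
  · exact ⟨((c.1, b.2.1, a.2.2), (c.2, (b.1, b.2.2), (a.1, a.2.1))),
      ⟨by refine Finset.mem_filter.2 ⟨Finset.mem_univ _, ?_, ?_, ?_⟩ <;> assumption, Finset.mem_coe.2 (Finset.mem_univ _)⟩, by ext v; simp; try tauto⟩

end Aux

section Main
open Finset SimpleGraph

set_option maxHeartbeats 2000000 in
/-- **Triangle removal lemma, tripartite graph version.**
For every `ε > 0` there is a `δ > 0` such that any tripartite graph on finite nonempty
vertex sets `V1, V2, V3` with at most `δ|V1||V2||V3|` triangles can be approximated by a
triangle-free tripartite graph, removing/changing at most `ε|Vi||Vj|` edges in each class. -/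
theorem triangle_removal_tripartite :
    ∀ ε : ℝ, 0 < ε → ∃ δ : ℝ, 0 < δ ∧
      ∀ (V1 V2 V3 : Type) [Fintype V1] [Fintype V2] [Fintype V3]
        [Nonempty V1] [Nonempty V2] [Nonempty V3]
        (E12 : Finset (V1 × V2)) (E23 : Finset (V2 × V3)) (E31 : Finset (V3 × V1)),
        ((Finset.univ.filter (fun p : V1 × V2 × V3 =>
            (p.1, p.2.1) ∈ E12 ∧ (p.2.1, p.2.2) ∈ E23 ∧ (p.2.2, p.1) ∈ E31)).card : ℝ)
            ≤ δ * Fintype.card V1 * Fintype.card V2 * Fintype.card V3 →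
        ∃ (E'12 : Finset (V1 × V2)) (E'23 : Finset (V2 × V3)) (E'31 : Finset (V3 × V1)),
          (∀ (x1 : V1) (x2 : V2) (x3 : V3),
            ¬ ((x1, x2) ∈ E'12 ∧ (x2, x3) ∈ E'23 ∧ (x3, x1) ∈ E'31)) ∧
          ((E12 \ E'12).card : ℝ) ≤ ε * Fintype.card V1 * Fintype.card V2 ∧
          ((E23 \ E'23).card : ℝ) ≤ ε * Fintype.card V2 * Fintype.card V3 ∧
          ((E31 \ E'31).card : ℝ) ≤ ε * Fintype.card V3 * Fintype.card V1 := by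
  intro ε hε
  set ε' : ℝ := min (ε / 27) 1 with hε'def
  have hε'pos : 0 < ε' := lt_min (by positivity) one_pos
  have hε'le : (27 : ℝ) * ε' ≤ ε := by
    have := min_le_left (ε / 27) 1; rw [hε'def]; linarith
  refine ⟨SimpleGraph.triangleRemovalBound ε',
    SimpleGraph.triangleRemovalBound_pos hε'pos, ?_⟩
  intro V1 V2 V3 _ _ _ _ _ _ E12 E23 E31 hT
  have hn1 : 0 < Fintype.card V1 := Fintype.card_pos
  have hn2 : 0 < Fintype.card V2 := Fintype.card_pos
  have hn3 : 0 < Fintype.card V3 := Fintype.card_pos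
  set n1 := Fintype.card V1
  set n2 := Fintype.card V2
  set n3 := Fintype.card V3
  set G : SimpleGraph ((V1 × V2 × V3) ⊕ (V1 × V2 × V3) ⊕ (V1 × V2 × V3)) :=
    triGraph E12 E23 E31 with hG
  have hcard : Fintype.card ((V1 × V2 × V3) ⊕ (V1 × V2 × V3) ⊕ (V1 × V2 × V3))
      = 3 * (n1 * n2 * n3) := by
    simp [Fintype.card_sum, Fintype.card_prod]; ring
  have hNpos : (0 : ℝ) < (n1 : ℝ) * n2 * n3 := by positivity
  have hδpos : 0 < SimpleGraph.triangleRemovalBound ε' :=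
    SimpleGraph.triangleRemovalBound_pos hε'pos
  -- few triangles in the blow-up graph
  have hcl : (#(G.cliqueFinset 3) : ℝ) < SimpleGraph.triangleRemovalBound ε' *
      (Fintype.card ((V1 × V2 × V3) ⊕ (V1 × V2 × V3) ⊕ (V1 × V2 × V3))) ^ 3 := by
    have h1 : (#(G.cliqueFinset 3) : ℝ) ≤
        (#(univ.filter (fun p : V1 × V2 × V3 =>
          (p.1, p.2.1) ∈ E12 ∧ (p.2.1, p.2.2) ∈ E23 ∧ (p.2.2, p.1) ∈ E31)) : ℝ) *
          ((n2 * n3) * ((n1 * n3) * (n1 * n2))) := by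
      exact_mod_cast cliqueCard_le E12 E23 E31
    rw [hcard]
    push_cast
    nlinarith [mul_le_mul_of_nonneg_right hT (by positivity :
      (0:ℝ) ≤ (n2 * n3) * ((n1 * n3) * (n1 * n2))),
      mul_pos (mul_pos hδpos hNpos) (mul_pos hNpos hNpos)]
  obtain ⟨G', hle, instG', hcut, hfree⟩ := SimpleGraph.triangle_removal hcl
  -- the removed-copies counters
  set rem12 : V1 × V2 → Finset ((V1 × V2 × V3) × (V1 × V2 × V3)) := fun e =>
    univ.filter (fun ab => ab.1.1 = e.1 ∧ ab.2.2.1 = e.2 ∧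
      ¬ G'.Adj (Sum.inl ab.1) (Sum.inr (Sum.inl ab.2))) with hrem12
  set rem23 : V2 × V3 → Finset ((V1 × V2 × V3) × (V1 × V2 × V3)) := fun e =>
    univ.filter (fun ab => ab.1.2.1 = e.1 ∧ ab.2.2.2 = e.2 ∧
      ¬ G'.Adj (Sum.inr (Sum.inl ab.1)) (Sum.inr (Sum.inr ab.2))) with hrem23
  set rem31 : V3 × V1 → Finset ((V1 × V2 × V3) × (V1 × V2 × V3)) := fun e =>
    univ.filter (fun ab => ab.1.2.2 = e.1 ∧ ab.2.1 = e.2 ∧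
      ¬ G'.Adj (Sum.inr (Sum.inr ab.1)) (Sum.inl ab.2)) with hrem31
  refine ⟨E12.filter (fun e => 3 * #(rem12 e) < (n2 * n3) * (n1 * n3)),
          E23.filter (fun e => 3 * #(rem23 e) < (n1 * n3) * (n1 * n2)),
          E31.filter (fun e => 3 * #(rem31 e) < (n1 * n2) * (n2 * n3)), ?_, ?_, ?_, ?_⟩
  · -- triangle-freeness
    rintro x1 x2 x3 ⟨h12, h23, h31⟩
    obtain ⟨h12E, h12c⟩ := mem_filter.1 h12
    obtain ⟨h23E, h23c⟩ := mem_filter.1 h23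
    obtain ⟨h31E, h31c⟩ := mem_filter.1 h31
    set A1 := univ.filter (fun a : V1 × V2 × V3 => a.1 = x1) with hA1
    set A2 := univ.filter (fun a : V1 × V2 × V3 => a.2.1 = x2) with hA2
    set A3 := univ.filter (fun a : V1 × V2 × V3 => a.2.2 = x3) with hA3
    set S := A1 ×ˢ A2 ×ˢ A3 with hSdef
    set B1 := S.filter (fun p => ¬ G'.Adj (Sum.inl p.1) (Sum.inr (Sum.inl p.2.1))) with hB1def
    set B2 := S.filter (fun p => ¬ G'.Adj (Sum.inr (Sum.inl p.2.1)) (Sum.inr (Sum.inr p.2.2)))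
      with hB2def
    set B3 := S.filter (fun p => ¬ G'.Adj (Sum.inr (Sum.inr p.2.2)) (Sum.inl p.1)) with hB3def
    have hS : #S = (n2 * n3) * ((n1 * n3) * (n1 * n2)) := by
      rw [hSdef, card_product, card_product, hA1, hA2, hA3,
        card_fix1, card_fix2, card_fix3]
    have hsub : ¬ (S ⊆ B1 ∪ B2 ∪ B3) := by
      intro hsub
      have hc : #S ≤ #B1 + #B2 + #B3 :=
        le_trans (card_le_card hsub)
          (le_trans (card_union_le _ _) (Nat.add_le_add_right (card_union_le _ _) _))
      have hB1' : #B1 ≤ #(rem12 (x1, x2)) * (n1 * n2) := by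
        have h := Finset.card_le_card_of_injOn
          (f := fun p : (V1 × V2 × V3) × (V1 × V2 × V3) × (V1 × V2 × V3) =>
            ((p.1, p.2.1), p.2.2))
          (s := B1) (t := rem12 (x1, x2) ×ˢ A3)
          (by intro p hp
              simp only [hB1def, hSdef, hA1, hA2, hA3, hrem12, Finset.mem_coe, mem_filter, mem_product,
                mem_univ, true_and] at hp ⊢
              tauto)
          (by intro p _ q _ h
              simp only [Prod.ext_iff] at h ⊢
              tauto)
        simpa [card_product, hA3, card_fix3] using h
      have hB2' : #B2 ≤ #(rem23 (x2, x3)) * (n2 * n3) := by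
        have h := Finset.card_le_card_of_injOn
          (f := fun p : (V1 × V2 × V3) × (V1 × V2 × V3) × (V1 × V2 × V3) =>
            ((p.2.1, p.2.2), p.1))
          (s := B2) (t := rem23 (x2, x3) ×ˢ A1)
          (by intro p hp
              simp only [hB2def, hSdef, hA1, hA2, hA3, hrem23, Finset.mem_coe, mem_filter, mem_product,
                mem_univ, true_and] at hp ⊢
              tauto)
          (by intro p _ q _ h
              simp only [Prod.ext_iff] at h ⊢
              tauto)
        simpa [card_product, hA1, card_fix1] using h
      have hB3' : #B3 ≤ #(rem31 (x3, x1)) * (n1 * n3) := by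
        have h := Finset.card_le_card_of_injOn
          (f := fun p : (V1 × V2 × V3) × (V1 × V2 × V3) × (V1 × V2 × V3) =>
            ((p.2.2, p.1), p.2.1))
          (s := B3) (t := rem31 (x3, x1) ×ˢ A2)
          (by intro p hp
              simp only [hB3def, hSdef, hA1, hA2, hA3, hrem31, Finset.mem_coe, mem_filter, mem_product,
                mem_univ, true_and] at hp ⊢
              tauto)
          (by intro p _ q _ h
              simp only [Prod.ext_iff] at h ⊢
              tauto)
        simpa [card_product, hA2, card_fix2] using h
      have t1 : 3 * #B1 < #S := by
        rw [hS]
        calc 3 * #B1 ≤ 3 * (#(rem12 (x1, x2)) * (n1 * n2)) := Nat.mul_le_mul_left _ hB1'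
          _ = (3 * #(rem12 (x1, x2))) * (n1 * n2) := by ring
          _ < ((n2 * n3) * (n1 * n3)) * (n1 * n2) :=
            mul_lt_mul_of_pos_right h12c (Nat.mul_pos hn1 hn2)
          _ = (n2 * n3) * ((n1 * n3) * (n1 * n2)) := by ring
      have t2 : 3 * #B2 < #S := by
        rw [hS]
        calc 3 * #B2 ≤ 3 * (#(rem23 (x2, x3)) * (n2 * n3)) := Nat.mul_le_mul_left _ hB2'
          _ = (3 * #(rem23 (x2, x3))) * (n2 * n3) := by ring
          _ < ((n1 * n3) * (n1 * n2)) * (n2 * n3) :=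
            mul_lt_mul_of_pos_right h23c (Nat.mul_pos hn2 hn3)
          _ = (n2 * n3) * ((n1 * n3) * (n1 * n2)) := by ring
      have t3 : 3 * #B3 < #S := by
        rw [hS]
        calc 3 * #B3 ≤ 3 * (#(rem31 (x3, x1)) * (n1 * n3)) := Nat.mul_le_mul_left _ hB3'
          _ = (3 * #(rem31 (x3, x1))) * (n1 * n3) := by ring
          _ < ((n1 * n2) * (n2 * n3)) * (n1 * n3) :=
            mul_lt_mul_of_pos_right h31c (Nat.mul_pos hn1 hn3)
          _ = (n2 * n3) * ((n1 * n3) * (n1 * n2)) := by ring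
      omega
    obtain ⟨p, hpS, hpB⟩ := not_subset.1 hsub
    simp only [mem_union, not_or] at hpB
    obtain ⟨⟨hp1, hp2⟩, hp3⟩ := hpB
    have a1 : G'.Adj (Sum.inl p.1) (Sum.inr (Sum.inl p.2.1)) := by
      by_contra h; exact hp1 (mem_filter.2 ⟨hpS, h⟩)
    have a2 : G'.Adj (Sum.inr (Sum.inl p.2.1)) (Sum.inr (Sum.inr p.2.2)) := by
      by_contra h; exact hp2 (mem_filter.2 ⟨hpS, h⟩)
    have a3 : G'.Adj (Sum.inr (Sum.inr p.2.2)) (Sum.inl p.1) := by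
      by_contra h; exact hp3 (mem_filter.2 ⟨hpS, h⟩)
    exact hfree _ (SimpleGraph.is3Clique_triple_iff.2 ⟨a1, a3.symm, a2⟩)
  · -- class 12 bound
    set F12 := E12.filter (fun e => 3 * #(rem12 e) < (n2 * n3) * (n1 * n3)) with hF12
    set R := univ.filter (fun ab : (V1 × V2 × V3) × (V1 × V2 × V3) =>
      (ab.1.1, ab.2.2.1) ∈ E12 \ F12 ∧
        ¬ G'.Adj (Sum.inl ab.1) (Sum.inr (Sum.inl ab.2))) with hR
    have hfib : #R = ∑ e ∈ E12 \ F12, #(R.filter (fun ab => (ab.1.1, ab.2.2.1) = e)) :=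
      card_eq_sum_card_fiberwise (fun ab hab => (mem_filter.1 hab).2.1)
    have hstep : ∀ e ∈ E12 \ F12,
        (n2 * n3) * (n1 * n3) ≤ 3 * #(R.filter (fun ab => (ab.1.1, ab.2.2.1) = e)) := by
      intro e he
      obtain ⟨heE, heN⟩ := mem_sdiff.1 he
      have hK : (n2 * n3) * (n1 * n3) ≤ 3 * #(rem12 e) :=
        not_lt.1 (fun h => heN (mem_filter.2 ⟨heE, h⟩))
      refine le_trans hK (Nat.mul_le_mul_left _ (card_le_card ?_))
      intro ab hab
      simp only [hrem12, hR, mem_filter, mem_univ, true_and] at hab ⊢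
      obtain ⟨hx, hy, hz⟩ := hab
      refine ⟨⟨?_, hz⟩, ?_⟩ <;> rw [hx, hy] <;> simp [he]
    have hA : #(E12 \ F12) * ((n2 * n3) * (n1 * n3)) ≤ 3 * #R := by
      calc #(E12 \ F12) * ((n2 * n3) * (n1 * n3))
          = ∑ _e ∈ E12 \ F12, (n2 * n3) * (n1 * n3) := by rw [sum_const, smul_eq_mul]
        _ ≤ ∑ e ∈ E12 \ F12, 3 * #(R.filter (fun ab => (ab.1.1, ab.2.2.1) = e)) :=
            sum_le_sum hstep
        _ = 3 * #R := by rw [← mul_sum, ← hfib]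
    have hBle : #R ≤ #(G.edgeFinset \ G'.edgeFinset) := by
      apply Finset.card_le_card_of_injOn
        (f := fun ab : (V1 × V2 × V3) × (V1 × V2 × V3) =>
          s(Sum.inl ab.1, Sum.inr (Sum.inl ab.2)))
      · intro ab hab
        simp only [hR, Finset.mem_coe, mem_filter, mem_univ, true_and] at hab
        obtain ⟨hE, hnAdj⟩ := hab
        have hE12 : (ab.1.1, ab.2.2.1) ∈ E12 := (mem_sdiff.1 hE).1
        simp only [Finset.mem_coe, mem_sdiff, SimpleGraph.mem_edgeFinset,
          SimpleGraph.mem_edgeSet, hG, triGraph_adj]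
        exact ⟨Or.inl (by simpa using hE12), hnAdj⟩
      · intro a _ b _ h
        simp only [Sym2.eq_iff, Sum.inl.injEq, Sum.inr.injEq, reduceCtorEq, and_self,
          and_false, false_and, or_false] at h
        rw [Prod.ext_iff]; exact h
    have hDlt : (#(G.edgeFinset \ G'.edgeFinset) : ℝ) < ε' * (3 * ((n1 : ℝ) * n2 * n3)) ^ 2 := by
      have hsub' := SimpleGraph.edgeFinset_mono hle
      have heq : (#(G.edgeFinset \ G'.edgeFinset) : ℝ)
          = (#G.edgeFinset : ℝ) - #G'.edgeFinset := by
        rw [card_sdiff_of_subset hsub']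
        exact_mod_cast Nat.cast_sub (card_le_card hsub')
      rw [heq]
      refine lt_of_lt_of_le hcut (le_of_eq ?_)
      rw [hcard]; push_cast; ring
    have hK : (0 : ℝ) < ((n2 : ℝ) * n3) * ((n1 : ℝ) * n3) := by positivity
    have final : (#(E12 \ F12) : ℝ) * (((n2 : ℝ) * n3) * ((n1 : ℝ) * n3))
        ≤ (ε * n1 * n2) * (((n2 : ℝ) * n3) * ((n1 : ℝ) * n3)) := by
      have hA' : (#(E12 \ F12) : ℝ) * (((n2 : ℝ) * n3) * ((n1 : ℝ) * n3)) ≤ 3 * #R := by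
        exact_mod_cast hA
      have hBle' : (#R : ℝ) ≤ #(G.edgeFinset \ G'.edgeFinset) := by exact_mod_cast hBle
      have h27 : 3 * (ε' * (3 * ((n1 : ℝ) * n2 * n3)) ^ 2)
          ≤ (ε * n1 * n2) * (((n2 : ℝ) * n3) * ((n1 : ℝ) * n3)) := by nlinarith [sq_nonneg ((n1 : ℝ) * n2 * n3)]
      linarith
    exact le_of_mul_le_mul_right final hK
  · -- class 23 bound
    set F23 := E23.filter (fun e => 3 * #(rem23 e) < (n1 * n3) * (n1 * n2)) with hF23
    set R := univ.filter (fun ab : (V1 × V2 × V3) × (V1 × V2 × V3) =>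
      (ab.1.2.1, ab.2.2.2) ∈ E23 \ F23 ∧
        ¬ G'.Adj (Sum.inr (Sum.inl ab.1)) (Sum.inr (Sum.inr ab.2))) with hR
    have hfib : #R = ∑ e ∈ E23 \ F23, #(R.filter (fun ab => (ab.1.2.1, ab.2.2.2) = e)) :=
      card_eq_sum_card_fiberwise (fun ab hab => (mem_filter.1 hab).2.1)
    have hstep : ∀ e ∈ E23 \ F23,
        (n1 * n3) * (n1 * n2) ≤ 3 * #(R.filter (fun ab => (ab.1.2.1, ab.2.2.2) = e)) := by
      intro e he
      obtain ⟨heE, heN⟩ := mem_sdiff.1 he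
      have hK : (n1 * n3) * (n1 * n2) ≤ 3 * #(rem23 e) :=
        not_lt.1 (fun h => heN (mem_filter.2 ⟨heE, h⟩))
      refine le_trans hK (Nat.mul_le_mul_left _ (card_le_card ?_))
      intro ab hab
      simp only [hrem23, hR, mem_filter, mem_univ, true_and] at hab ⊢
      obtain ⟨hx, hy, hz⟩ := hab
      refine ⟨⟨?_, hz⟩, ?_⟩ <;> rw [hx, hy] <;> simp [he]
    have hA : #(E23 \ F23) * ((n1 * n3) * (n1 * n2)) ≤ 3 * #R := by
      calc #(E23 \ F23) * ((n1 * n3) * (n1 * n2))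
          = ∑ _e ∈ E23 \ F23, (n1 * n3) * (n1 * n2) := by rw [sum_const, smul_eq_mul]
        _ ≤ ∑ e ∈ E23 \ F23, 3 * #(R.filter (fun ab => (ab.1.2.1, ab.2.2.2) = e)) :=
            sum_le_sum hstep
        _ = 3 * #R := by rw [← mul_sum, ← hfib]
    have hBle : #R ≤ #(G.edgeFinset \ G'.edgeFinset) := by
      apply Finset.card_le_card_of_injOn
        (f := fun ab : (V1 × V2 × V3) × (V1 × V2 × V3) =>
          s(Sum.inr (Sum.inl ab.1), Sum.inr (Sum.inr ab.2)))
      · intro ab hab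
        simp only [hR, Finset.mem_coe, mem_filter, mem_univ, true_and] at hab
        obtain ⟨hE, hnAdj⟩ := hab
        have hE23x : (ab.1.2.1, ab.2.2.2) ∈ E23 := (mem_sdiff.1 hE).1
        simp only [Finset.mem_coe, mem_sdiff, SimpleGraph.mem_edgeFinset,
          SimpleGraph.mem_edgeSet, hG, triGraph_adj]
        exact ⟨Or.inl (by simpa using hE23x), hnAdj⟩
      · intro a _ b _ h
        simp only [Sym2.eq_iff, Sum.inl.injEq, Sum.inr.injEq, reduceCtorEq, and_self,
          and_false, false_and, or_false] at h
        rw [Prod.ext_iff]; exact h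
    have hDlt : (#(G.edgeFinset \ G'.edgeFinset) : ℝ) < ε' * (3 * ((n1 : ℝ) * n2 * n3)) ^ 2 := by
      have hsub' := SimpleGraph.edgeFinset_mono hle
      have heq : (#(G.edgeFinset \ G'.edgeFinset) : ℝ)
          = (#G.edgeFinset : ℝ) - #G'.edgeFinset := by
        rw [card_sdiff_of_subset hsub']
        exact_mod_cast Nat.cast_sub (card_le_card hsub')
      rw [heq]
      refine lt_of_lt_of_le hcut (le_of_eq ?_)
      rw [hcard]; push_cast; ring
    have hK : (0 : ℝ) < ((n1 : ℝ) * n3) * ((n1 : ℝ) * n2) := by positivity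
    have final : (#(E23 \ F23) : ℝ) * (((n1 : ℝ) * n3) * ((n1 : ℝ) * n2))
        ≤ (ε * n2 * n3) * (((n1 : ℝ) * n3) * ((n1 : ℝ) * n2)) := by
      have hA' : (#(E23 \ F23) : ℝ) * (((n1 : ℝ) * n3) * ((n1 : ℝ) * n2)) ≤ 3 * #R := by
        exact_mod_cast hA
      have hBle' : (#R : ℝ) ≤ #(G.edgeFinset \ G'.edgeFinset) := by exact_mod_cast hBle
      have h27 : 3 * (ε' * (3 * ((n1 : ℝ) * n2 * n3)) ^ 2)
          ≤ (ε * n2 * n3) * (((n1 : ℝ) * n3) * ((n1 : ℝ) * n2)) := by nlinarith [sq_nonneg ((n1 : ℝ) * n2 * n3)]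
      linarith
    exact le_of_mul_le_mul_right final hK
  · -- class 31 bound
    set F31 := E31.filter (fun e => 3 * #(rem31 e) < (n1 * n2) * (n2 * n3)) with hF31
    set R := univ.filter (fun ab : (V1 × V2 × V3) × (V1 × V2 × V3) =>
      (ab.1.2.2, ab.2.1) ∈ E31 \ F31 ∧
        ¬ G'.Adj (Sum.inr (Sum.inr ab.1)) (Sum.inl ab.2)) with hR
    have hfib : #R = ∑ e ∈ E31 \ F31, #(R.filter (fun ab => (ab.1.2.2, ab.2.1) = e)) :=
      card_eq_sum_card_fiberwise (fun ab hab => (mem_filter.1 hab).2.1)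
    have hstep : ∀ e ∈ E31 \ F31,
        (n1 * n2) * (n2 * n3) ≤ 3 * #(R.filter (fun ab => (ab.1.2.2, ab.2.1) = e)) := by
      intro e he
      obtain ⟨heE, heN⟩ := mem_sdiff.1 he
      have hK : (n1 * n2) * (n2 * n3) ≤ 3 * #(rem31 e) :=
        not_lt.1 (fun h => heN (mem_filter.2 ⟨heE, h⟩))
      refine le_trans hK (Nat.mul_le_mul_left _ (card_le_card ?_))
      intro ab hab
      simp only [hrem31, hR, mem_filter, mem_univ, true_and] at hab ⊢
      obtain ⟨hx, hy, hz⟩ := hab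
      refine ⟨⟨?_, hz⟩, ?_⟩ <;> rw [hx, hy] <;> simp [he]
    have hA : #(E31 \ F31) * ((n1 * n2) * (n2 * n3)) ≤ 3 * #R := by
      calc #(E31 \ F31) * ((n1 * n2) * (n2 * n3))
          = ∑ _e ∈ E31 \ F31, (n1 * n2) * (n2 * n3) := by rw [sum_const, smul_eq_mul]
        _ ≤ ∑ e ∈ E31 \ F31, 3 * #(R.filter (fun ab => (ab.1.2.2, ab.2.1) = e)) :=
            sum_le_sum hstep
        _ = 3 * #R := by rw [← mul_sum, ← hfib]
    have hBle : #R ≤ #(G.edgeFinset \ G'.edgeFinset) := by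
      apply Finset.card_le_card_of_injOn
        (f := fun ab : (V1 × V2 × V3) × (V1 × V2 × V3) =>
          s(Sum.inr (Sum.inr ab.1), Sum.inl ab.2))
      · intro ab hab
        simp only [hR, Finset.mem_coe, mem_filter, mem_univ, true_and] at hab
        obtain ⟨hE, hnAdj⟩ := hab
        have hE31 : (ab.1.2.2, ab.2.1) ∈ E31 := (mem_sdiff.1 hE).1
        simp only [Finset.mem_coe, mem_sdiff, SimpleGraph.mem_edgeFinset,
          SimpleGraph.mem_edgeSet, hG, triGraph_adj]
        exact ⟨Or.inl (by simpa using hE31), hnAdj⟩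
      · intro a _ b _ h
        simp only [Sym2.eq_iff, Sum.inl.injEq, Sum.inr.injEq, reduceCtorEq, and_self,
          and_false, false_and, or_false] at h
        rw [Prod.ext_iff]; exact h
    have hDlt : (#(G.edgeFinset \ G'.edgeFinset) : ℝ) < ε' * (3 * ((n1 : ℝ) * n2 * n3)) ^ 2 := by
      have hsub' := SimpleGraph.edgeFinset_mono hle
      have heq : (#(G.edgeFinset \ G'.edgeFinset) : ℝ)
          = (#G.edgeFinset : ℝ) - #G'.edgeFinset := by
        rw [card_sdiff_of_subset hsub']
        exact_mod_cast Nat.cast_sub (card_le_card hsub')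
      rw [heq]
      refine lt_of_lt_of_le hcut (le_of_eq ?_)
      rw [hcard]; push_cast; ring
    have hK : (0 : ℝ) < ((n1 : ℝ) * n2) * ((n2 : ℝ) * n3) := by positivity
    have final : (#(E31 \ F31) : ℝ) * (((n1 : ℝ) * n2) * ((n2 : ℝ) * n3))
        ≤ (ε * n3 * n1) * (((n1 : ℝ) * n2) * ((n2 : ℝ) * n3)) := by
      have hA' : (#(E31 \ F31) : ℝ) * (((n1 : ℝ) * n2) * ((n2 : ℝ) * n3)) ≤ 3 * #R := by
        exact_mod_cast hA
      have hBle' : (#R : ℝ) ≤ #(G.edgeFinset \ G'.edgeFinset) := by exact_mod_cast hBle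
      have h27 : 3 * (ε' * (3 * ((n1 : ℝ) * n2 * n3)) ^ 2)
          ≤ (ε * n3 * n1) * (((n1 : ℝ) * n2) * ((n2 : ℝ) * n3)) := by nlinarith [sq_nonneg ((n1 : ℝ) * n2 * n3)]
      linarith
    exact le_of_mul_le_mul_right final hK

end Main
end Aux
end

section
/- (Large discrepancy implies energy increment.) Let V = (J, (V_j)_{j∈J}, d, H_d) be a hypergraph system, let e ⊆ J, let E_e ∈ A_e, and for each f ∈ ∂e let B_f ⊆ A_f be a σ-algebra. Suppose Δ_e(E_e | ∨_{f∈∂e} B_f) ≥ ε for some ε > 0. Then for each f ∈ ∂e there exists a σ-algebra B'_f with B_f ⊆ B'_f ⊆ A_f such that complex(B'_f) ≤ complex(B_f) + 1 and ℰ_{E_e}(∨_{f∈∂e} B'_f) ≥ ℰ_{E_e}(∨_{f∈∂e} B_f) + ε². -/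
open scoped Classical BigOperators MeasureTheory

noncomputable section

/-- Average of a real-valued function over a finite type. -/
def avg {α : Type*} [Fintype α] (f : α → ℝ) : ℝ :=
  (∑ x, f x) / (Fintype.card α)

/-- Real-valued indicator function of a set. -/
def ind {α : Type*} (E : Set α) (x : α) : ℝ := if x ∈ E then 1 else 0

/-- Average of `f` over the set `A`. -/
def avgOn {α : Type*} [Fintype α] (A : Set α) (f : α → ℝ) : ℝ :=
  (∑ x ∈ Finset.univ.filter (· ∈ A), f x) / ((Finset.univ.filter (· ∈ A)).card)

/-- The smallest set of the σ-algebra `m` containing `x`. -/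
def atomAt {α : Type*} (m : MeasurableSpace α) (x : α) : Set α :=
  ⋂₀ {s | MeasurableSet[m] s ∧ x ∈ s}

/-- Conditional expectation: the average of `f` over the smallest `m`-set containing `x`. -/
def cexp {α : Type*} [Fintype α] (m : MeasurableSpace α) (f : α → ℝ) (x : α) : ℝ :=
  avgOn (atomAt m x) f

/-- The `E`-energy of a σ-algebra. -/
def energy {α : Type*} [Fintype α] (E : Set α) (m : MeasurableSpace α) : ℝ :=
  avg (fun x => (cexp m (ind E) x) ^ 2)

/-- Complexity: the least number of sets needed to generate `m` as a σ-algebra. -/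
def complexity {α : Type*} (m : MeasurableSpace α) : ℕ :=
  sInf {n | ∃ S : Finset (Set α), S.card = n ∧ MeasurableSpace.generateFrom (↑S : Set (Set α)) = m}

/-- The σ-algebra `A_e` of sets depending only on the coordinates indexed by `e`. -/
def cylAlg {J : Type*} (V : J → Type*) (e : Finset J) : MeasurableSpace (∀ j, V j) :=
  MeasurableSpace.comap (fun x (j : e) => x j.1) ⊤

/-- The skeleton `∂e = {f ⊊ e : |f| = |e| - 1}`. -/
def skel {J : Type*} (e : Finset J) : Finset (Finset J) :=
  e.image (fun j => e.erase j)

/-- The boundary `∂H` of a hypergraph. -/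
def hbd {J : Type*} (H : Finset (Finset J)) : Finset (Finset J) :=
  H.biUnion skel

/-- The `e`-discrepancy of `E` relative to the σ-algebra `m`. -/
def disc {J : Type*} [Fintype J] (V : J → Type*) [∀ j, Fintype (V j)]
    (e : Finset J) (E : Set (∀ j, V j)) (m : MeasurableSpace (∀ j, V j)) : ℝ :=
  sSup { r | ∃ Ef : Finset J → Set (∀ j, V j),
    (∀ f ∈ skel e, MeasurableSet[cylAlg V f] (Ef f)) ∧
    r = |avg (fun x => (ind E x - cexp m (ind E) x) * ∏ f ∈ skel e, ind (Ef f) x)| }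

/-- A growth function: increasing on positives and at least `1 + x`. -/
def IsGrowth (F : ℝ → ℝ) : Prop :=
  (∀ x y, 0 < x → x < y → F x < F y) ∧ ∀ x, 0 < x → 1 + x ≤ F x

/-- An atom of a σ-algebra on a finite set: a minimal non-empty measurable set. -/
def IsAtomOf {α : Type*} (m : MeasurableSpace α) (A : Set α) : Prop :=
  MeasurableSet[m] A ∧ A.Nonempty ∧ ∀ s, MeasurableSet[m] s → s ⊆ A → s = ∅ ∨ s = A

end


noncomputable section EnergyIncrementAux
set_option linter.unusedSectionVars false

variable {α : Type*} [Fintype α]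

lemma mem_atomAt_self (m : MeasurableSpace α) (x : α) : x ∈ atomAt m x :=
  Set.mem_sInter.mpr fun _ hs => hs.2

lemma atomAt_subset {m : MeasurableSpace α} {x : α} {s : Set α}
    (hs : MeasurableSet[m] s) (hx : x ∈ s) : atomAt m x ⊆ s :=
  Set.sInter_subset_of_mem ⟨hs, hx⟩

lemma measurableSet_atomAt (m : MeasurableSpace α) (x : α) :
    MeasurableSet[m] (atomAt m x) :=
  MeasurableSet.sInter (Set.to_countable _) (fun _ hs => hs.1)

lemma atomAt_eq_of_mem {m : MeasurableSpace α} {x y : α} (h : y ∈ atomAt m x) :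
    atomAt m y = atomAt m x := by
  have hxy : x ∈ atomAt m y := by
    refine Set.mem_sInter.mpr fun s hs => ?_
    by_contra hx
    exact (atomAt_subset hs.1.compl hx h) hs.2
  exact le_antisymm (atomAt_subset (measurableSet_atomAt m x) h)
    (atomAt_subset (measurableSet_atomAt m y) hxy)

lemma mem_atomAt_symm {m : MeasurableSpace α} {x y : α} (h : y ∈ atomAt m x) :
    x ∈ atomAt m y := by
  rw [atomAt_eq_of_mem h]; exact mem_atomAt_self m x

/-- `w` is constant on the atoms of `m`. -/
def ConstOn (m : MeasurableSpace α) (w : α → ℝ) : Prop :=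
  ∀ x y, y ∈ atomAt m x → w y = w x

lemma constOn_ind {m : MeasurableSpace α} {s : Set α} (hs : MeasurableSet[m] s) :
    ConstOn m (ind s) := by
  intro x y hy
  by_cases hx : x ∈ s
  · have := atomAt_subset hs hx hy
    simp [ind, hx, this]
  · have := atomAt_subset hs.compl hx hy
    simp [ind, hx, (by simpa using this : y ∉ s)]

lemma constOn_cexp (m : MeasurableSpace α) (f : α → ℝ) : ConstOn m (cexp m f) := by
  intro x y hy
  unfold cexp
  rw [atomAt_eq_of_mem hy]

lemma atomAt_anti {m m' : MeasurableSpace α} (h : m ≤ m') (x : α) :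
    atomAt m' x ⊆ atomAt m x :=
  Set.sInter_subset_sInter fun s hs => ⟨h s hs.1, hs.2⟩

lemma ConstOn.mono {m m' : MeasurableSpace α} (h : m ≤ m') {w : α → ℝ}
    (hw : ConstOn m w) : ConstOn m' w :=
  fun x y hy => hw x y (atomAt_anti h x hy)

lemma constOn_prod {m : MeasurableSpace α} {ι : Type*} (s : Finset ι) (F : ι → α → ℝ)
    (hF : ∀ i ∈ s, ConstOn m (F i)) : ConstOn m (fun x => ∏ i ∈ s, F i x) :=
  fun x y hy => Finset.prod_congr rfl fun i hi => hF i hi x y hy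

/-- Conditional expectation is self-adjoint against functions constant on atoms. -/
lemma sum_cexp_mul (m : MeasurableSpace α) (f w : α → ℝ) (hw : ConstOn m w) :
    ∑ x, cexp m f x * w x = ∑ x, f x * w x := by
  have key : ∀ x : α, cexp m f x * w x =
      ∑ y, (if y ∈ atomAt m x then f y * w x /
        ((Finset.univ.filter (· ∈ atomAt m x)).card : ℝ) else 0) := by
    intro x
    rw [← Finset.sum_filter]
    unfold cexp avgOn
    rw [div_mul_eq_mul_div, Finset.sum_mul, Finset.sum_div]
  calc ∑ x, cexp m f x * w x
      = ∑ x, ∑ y, (if y ∈ atomAt m x then f y * w x /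
        ((Finset.univ.filter (· ∈ atomAt m x)).card : ℝ) else 0) :=
        Finset.sum_congr rfl fun x _ => key x
    _ = ∑ y, ∑ x, (if y ∈ atomAt m x then f y * w x /
        ((Finset.univ.filter (· ∈ atomAt m x)).card : ℝ) else 0) := Finset.sum_comm
    _ = ∑ y, f y * w y := by
        refine Finset.sum_congr rfl fun y _ => ?_
        have step : ∀ x : α, (if y ∈ atomAt m x then f y * w x /
            ((Finset.univ.filter (· ∈ atomAt m x)).card : ℝ) else 0) =
            (if x ∈ atomAt m y then f y * w y /
            ((Finset.univ.filter (· ∈ atomAt m y)).card : ℝ) else 0) := by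
          intro x
          by_cases hx : x ∈ atomAt m y
          · have hy : y ∈ atomAt m x := mem_atomAt_symm hx
            rw [if_pos hy, if_pos hx, atomAt_eq_of_mem hy, hw y x hx]
          · rw [if_neg (fun h => hx (mem_atomAt_symm h)), if_neg hx]
        rw [Finset.sum_congr rfl fun x _ => step x, ← Finset.sum_filter,
          Finset.sum_const, nsmul_eq_mul]
        have hcard : ((Finset.univ.filter (· ∈ atomAt m y)).card : ℝ) ≠ 0 := by
          have : y ∈ Finset.univ.filter (· ∈ atomAt m y) := by
            simp [mem_atomAt_self]
          simpa using Finset.card_ne_zero_of_mem this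
        field_simp

/-- Pythagoras for nested conditional expectations. -/
lemma sum_sq_cexp (m m' : MeasurableSpace α) (hmm' : m ≤ m') (f : α → ℝ) :
    ∑ x, cexp m' f x ^ 2 =
      ∑ x, cexp m f x ^ 2 + ∑ x, (cexp m' f x - cexp m f x) ^ 2 := by
  set g := cexp m' f with hg
  set h := cexp m f with hh
  have hx : ∑ x, g x * h x = ∑ x, h x * h x := by
    rw [sum_cexp_mul m' f h ((constOn_cexp m f).mono hmm'),
      ← sum_cexp_mul m f h (constOn_cexp m f)]
  have e1 : ∑ x, (g x - h x) ^ 2 + 2 * ∑ x, g x * h x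
      = ∑ x, g x ^ 2 + ∑ x, h x * h x := by
    rw [Finset.mul_sum, ← Finset.sum_add_distrib, ← Finset.sum_add_distrib]
    exact Finset.sum_congr rfl fun x _ => by ring
  have e2 : ∑ x, h x * h x = ∑ x, h x ^ 2 :=
    Finset.sum_congr rfl fun x _ => (sq (h x)).symm
  linarith

lemma generateFrom_measurables (m : MeasurableSpace α) :
    MeasurableSpace.generateFrom
      (↑((Set.toFinite {s | MeasurableSet[m] s}).toFinset) : Set (Set α)) = m := by
  rw [Set.Finite.coe_toFinset]
  refine le_antisymm (MeasurableSpace.generateFrom_le fun t ht => ht) fun t ht => ?_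
  exact MeasurableSpace.measurableSet_generateFrom ht

lemma complexity_spec (m : MeasurableSpace α) :
    ∃ S : Finset (Set α), S.card = complexity m ∧
      MeasurableSpace.generateFrom (↑S : Set (Set α)) = m := by
  have hne : {n | ∃ S : Finset (Set α), S.card = n ∧
      MeasurableSpace.generateFrom (↑S : Set (Set α)) = m}.Nonempty :=
    ⟨_, _, rfl, generateFrom_measurables m⟩
  obtain ⟨S, hS, hgen⟩ := Nat.sInf_mem hne
  exact ⟨S, hS, hgen⟩

lemma complexity_sup_singleton_le (m : MeasurableSpace α) (s : Set α) :
    complexity (m ⊔ MeasurableSpace.generateFrom {s}) ≤ complexity m + 1 := by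
  obtain ⟨S, hcard, hgen⟩ := complexity_spec m
  have hgen' : MeasurableSpace.generateFrom (↑(insert s S) : Set (Set α)) =
      m ⊔ MeasurableSpace.generateFrom {s} := by
    rw [Finset.coe_insert, Set.insert_eq, ← MeasurableSpace.generateFrom_sup_generateFrom,
      hgen, sup_comm]
  calc complexity (m ⊔ MeasurableSpace.generateFrom {s})
      ≤ (insert s S).card := Nat.sInf_le ⟨insert s S, rfl, hgen'⟩
    _ ≤ S.card + 1 := Finset.card_insert_le s S
    _ = complexity m + 1 := by rw [hcard]

end EnergyIncrementAux

/-- **Large discrepancy implies energy increment.**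
If `E_e ∈ A_e` has `e`-discrepancy at least `ε` with respect to `∨_{f∈∂e} B_f`,
then the σ-algebras `B_f` (`f ∈ ∂e`) can be refined to `B'_f ⊆ A_f`, each of complexity
at most one more, with the `E_e`-energy of the join increasing by at least `ε²`. -/
theorem large_discrepancy_energy_increment
    {J : Type} [Fintype J] (V : J → Type) [∀ j, Fintype (V j)] [∀ j, Nonempty (V j)]
    (d : ℕ) (hd : 1 ≤ d) (H : Finset (Finset J)) (hH : ∀ e ∈ H, e.card = d)
    (e : Finset J) (E : Set (∀ j, V j)) (hE : MeasurableSet[cylAlg V e] E)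
    (B : Finset J → MeasurableSpace (∀ j, V j))
    (hB : ∀ f ∈ skel e, B f ≤ cylAlg V f)
    (ε : ℝ) (hε : 0 < ε)
    (hdisc : ε ≤ disc V e E (⨆ f ∈ skel e, B f)) :
    ∃ B' : Finset J → MeasurableSpace (∀ j, V j),
      (∀ f ∈ skel e, B f ≤ B' f ∧ B' f ≤ cylAlg V f ∧
        complexity (B' f) ≤ complexity (B f) + 1) ∧
      energy E (⨆ f ∈ skel e, B f) + ε ^ 2 ≤ energy E (⨆ f ∈ skel e, B' f) := by
  classical
  set m : MeasurableSpace (∀ j, V j) := ⨆ f ∈ skel e, B f with hm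
  -- extract an optimal witness from the (finite, nonempty) set defining the discrepancy
  set S : Set ℝ := { r | ∃ Ef : Finset J → Set (∀ j, V j),
    (∀ f ∈ skel e, MeasurableSet[cylAlg V f] (Ef f)) ∧
    r = |avg (fun x => (ind E x - cexp m (ind E) x) * ∏ f ∈ skel e, ind (Ef f) x)| } with hSdef
  have hSne : S.Nonempty :=
    ⟨_, fun _ => Set.univ, fun f _ => MeasurableSet.univ, rfl⟩
  have hSfin : S.Finite := by
    have hsub : S ⊆ (fun Ef : Finset J → Set (∀ j, V j) =>
        |avg (fun x => (ind E x - cexp m (ind E) x) * ∏ f ∈ skel e, ind (Ef f) x)|) ''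
        Set.univ := by
      rintro r ⟨Ef, -, rfl⟩
      exact ⟨Ef, trivial, rfl⟩
    exact Set.Finite.subset (Set.toFinite _) hsub
  obtain ⟨Ef, hEf, hr⟩ := hSne.csSup_mem hSfin
  have hdisc' : ε ≤ |avg (fun x =>
      (ind E x - cexp m (ind E) x) * ∏ f ∈ skel e, ind (Ef f) x)| := by
    rw [← hr]; exact hdisc
  -- the refined σ-algebras
  refine ⟨fun f => B f ⊔ MeasurableSpace.generateFrom {Ef f}, fun f hf =>
    ⟨le_sup_left, sup_le (hB f hf) (MeasurableSpace.generateFrom_le ?_),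
      complexity_sup_singleton_le _ _⟩, ?_⟩
  · rintro t ht
    rw [Set.mem_singleton_iff] at ht
    subst ht
    exact hEf f hf
  set B' : Finset J → MeasurableSpace (∀ j, V j) :=
    fun f => B f ⊔ MeasurableSpace.generateFrom {Ef f} with hB'
  set m' : MeasurableSpace (∀ j, V j) := ⨆ f ∈ skel e, B' f with hm'
  have hmm' : m ≤ m' := iSup₂_mono fun f _ => le_sup_left
  have hEfm' : ∀ f ∈ skel e, MeasurableSet[m'] (Ef f) := by
    intro f hf
    have h1 : MeasurableSet[MeasurableSpace.generateFrom {Ef f}] (Ef f) :=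
      MeasurableSpace.measurableSet_generateFrom rfl
    have h2 : B' f ≤ m' := le_iSup₂ (f := fun f _ => B' f) f hf
    exact (le_sup_right.trans h2) _ h1
  set P : (∀ j, V j) → ℝ := fun x => ∏ f ∈ skel e, ind (Ef f) x with hPdef
  have hP : ConstOn m' P :=
    constOn_prod _ _ fun f hf => constOn_ind (hEfm' f hf)
  have hPabs : ∀ x, |P x| ≤ 1 := by
    intro x
    have h0 : 0 ≤ P x := Finset.prod_nonneg fun f _ => by
      unfold ind; split <;> norm_num
    have h1 : P x ≤ 1 := Finset.prod_le_one (fun f _ => by unfold ind; split <;> norm_num)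
      (fun f _ => by unfold ind; split <;> norm_num)
    rw [abs_of_nonneg h0]; exact h1
  set f0 : (∀ j, V j) → ℝ := ind E with hf0
  set g : (∀ j, V j) → ℝ := cexp m' f0 with hgdef
  set h : (∀ j, V j) → ℝ := cexp m f0 with hhdef
  set N : ℝ := (Fintype.card (∀ j, V j) : ℝ) with hN
  have hNpos : 0 < N := by
    have h0 : 0 < Fintype.card (∀ j, V j) := Fintype.card_pos
    rw [hN]
    exact_mod_cast h0
  -- orthogonality
  have horth : ∑ x, (f0 x - g x) * P x = 0 := by
    have hgp := sum_cexp_mul m' f0 P hP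
    have : ∑ x, (f0 x - g x) * P x = ∑ x, f0 x * P x - ∑ x, g x * P x := by
      rw [← Finset.sum_sub_distrib]
      exact Finset.sum_congr rfl fun x _ => by ring
    rw [this, hgp]; ring
  have hswap : ∑ x, (f0 x - h x) * P x = ∑ x, (g x - h x) * P x := by
    have : ∑ x, (f0 x - h x) * P x - ∑ x, (g x - h x) * P x
        = ∑ x, (f0 x - g x) * P x := by
      rw [← Finset.sum_sub_distrib]
      exact Finset.sum_congr rfl fun x _ => by ring
    linarith [horth, this]
  -- bound
  have habs : |∑ x, (g x - h x) * P x| ≤ ∑ x, |g x - h x| := by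
    refine (Finset.abs_sum_le_sum_abs _ _).trans (Finset.sum_le_sum fun x _ => ?_)
    rw [abs_mul]
    calc |g x - h x| * |P x| ≤ |g x - h x| * 1 :=
          mul_le_mul_of_nonneg_left (hPabs x) (abs_nonneg _)
      _ = |g x - h x| := mul_one _
  have hchain : ε ≤ (∑ x, |g x - h x|) / N := by
    have h1 : |avg (fun x => (f0 x - h x) * P x)| = |∑ x, (g x - h x) * P x| / N := by
      rw [avg, hswap, abs_div, abs_of_pos hNpos]
    calc ε ≤ |avg (fun x => (f0 x - h x) * P x)| := hdisc'
      _ = |∑ x, (g x - h x) * P x| / N := h1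
      _ ≤ (∑ x, |g x - h x|) / N := by gcongr
  -- Cauchy–Schwarz and Pythagoras
  have hCS : (∑ x, |g x - h x|) ^ 2 ≤ N * ∑ x, (g x - h x) ^ 2 := by
    have := sq_sum_le_card_mul_sum_sq (s := (Finset.univ : Finset (∀ j, V j)))
      (f := fun x => |g x - h x|)
    simpa [hN, sq_abs, Finset.card_univ] using this
  have hsq : ε ^ 2 ≤ (∑ x, (g x - h x) ^ 2) / N := by
    have h2 : ε ^ 2 ≤ ((∑ x, |g x - h x|) / N) ^ 2 := by
      have hnn : 0 ≤ (∑ x, |g x - h x|) / N :=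
        div_nonneg (Finset.sum_nonneg fun x _ => abs_nonneg _) hNpos.le
      exact pow_le_pow_left₀ hε.le hchain 2
    calc ε ^ 2 ≤ ((∑ x, |g x - h x|) / N) ^ 2 := h2
      _ = (∑ x, |g x - h x|) ^ 2 / N ^ 2 := by rw [div_pow]
      _ ≤ (N * ∑ x, (g x - h x) ^ 2) / N ^ 2 := by gcongr
      _ = (∑ x, (g x - h x) ^ 2) / N := by
          field_simp
  have hpyth := sum_sq_cexp m m' hmm' f0
  have hen : energy E m' = energy E m + (∑ x, (g x - h x) ^ 2) / N := by
    show avg (fun x => (cexp m' (ind E) x) ^ 2) =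
      avg (fun x => (cexp m (ind E) x) ^ 2) + (∑ x, (g x - h x) ^ 2) / N
    rw [avg, avg]
    rw [show ∑ x, cexp m' (ind E) x ^ 2 = ∑ x, g x ^ 2 from rfl,
      show ∑ x, cexp m (ind E) x ^ 2 = ∑ x, h x ^ 2 from rfl]
    rw [show (∑ x, g x ^ 2) = ∑ x, h x ^ 2 + ∑ x, (g x - h x) ^ 2 from hpyth]
    rw [add_div]
  rw [hen]
  linarith
end
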